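/- arXiv:2601.22193 — 5 statements merged into one kernel-verified Lean document; each statement's English description precedes it below -/
import Mathlib

section
/- Let H and P be phylogenetic trees, let σ be a map from the leaves of P to the leaves of H, and let φ be a reconciliation of (H,P,σ). If φ is strongly acyclic (i.e., G^φ contains no directed cycle containing at least one strict arc), then φ is acyclic (i.e., D^φ contains no directed cycle). -/
/-- A phylogenetic tree: a finite rooted full binary tree. Every vertex has a `parent`
(the root being its own parent), iterating `parent` from any vertex reaches the root,
and every vertex has either `0` or `2` children. -/
structure PhyloTree (V : Type*) [Fintype V] [DecidableEq V] where
  root : V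
  parent : V → V
  parent_root : parent root = root
  toRoot : ∀ v : V, ∃ n : ℕ, parent^[n] v = root
  binary : ∀ v : V,
      (Finset.univ.filter fun w => parent w = v ∧ w ≠ root).card = 0 ∨
      (Finset.univ.filter fun w => parent w = v ∧ w ≠ root).card = 2

namespace PhyloTree

variable {V : Type*} [Fintype V] [DecidableEq V]

/-- `T.ParentArc a b` : `a` is the parent of `b`; these are the arcs of the tree
(the strict arcs, forming the set `A_par`). -/
def ParentArc (T : PhyloTree V) (a b : V) : Prop :=
  T.parent b = a ∧ b ≠ T.root

/-- `T.Anc a b` : `a` is an ancestor of `b`, equivalently `b` is a descendant of `a`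
(this includes the case `a = b`). -/
def Anc (T : PhyloTree V) (a b : V) : Prop :=
  ∃ n : ℕ, T.parent^[n] b = a

/-- `a` and `b` are incomparable: neither is an ancestor of the other. -/
def Incomp (T : PhyloTree V) (a b : V) : Prop :=
  ¬ T.Anc a b ∧ ¬ T.Anc b a

/-- `a` and `b` are siblings: distinct nodes with the same parent. -/
def Sibling (T : PhyloTree V) (a b : V) : Prop :=
  a ≠ b ∧ a ≠ T.root ∧ b ≠ T.root ∧ T.parent a = T.parent b

/-- `a` and `b` are cousins: their parents are siblings. -/
def Cousin (T : PhyloTree V) (a b : V) : Prop :=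
  a ≠ T.root ∧ b ≠ T.root ∧ T.Sibling (T.parent a) (T.parent b)

/-- A leaf: a node with no children. -/
def IsLeaf (T : PhyloTree V) (a : V) : Prop := ∀ b, ¬ T.ParentArc a b

theorem parentArc_irrefl (T : PhyloTree V) (a : V) : ¬ T.ParentArc a a := by
  rintro ⟨h, hr⟩
  obtain ⟨n, hn⟩ := T.toRoot a
  exact hr ((Function.iterate_fixed h n).symm.trans hn)

/-- The underlying undirected graph of the tree. -/
def ugraph (T : PhyloTree V) : SimpleGraph V where
  Adj a b := T.ParentArc a b ∨ T.ParentArc b a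
  symm := ⟨fun _ _ h => h.symm⟩
  loopless := ⟨fun a h => by
    rcases h with h | h <;> exact T.parentArc_irrefl a h⟩

/-- `T.dist a b` : the number of edges on the unique undirected path between `a` and `b`. -/
noncomputable def dist (T : PhyloTree V) (a b : V) : ℕ := T.ugraph.dist a b

/-- `T.IsLCA c a b` : `c` is the lowest common ancestor of `a` and `b`. -/
def IsLCA (T : PhyloTree V) (c a b : V) : Prop :=
  T.Anc c a ∧ T.Anc c b ∧ ∀ d, T.Anc d a → T.Anc d b → T.Anc d c

/-- The level of a node: `-dist(v, root)`, so nodes closer to the root have higher level. -/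
noncomputable def level (T : PhyloTree V) (v : V) : ℤ := -(T.dist v T.root : ℤ)

/-- Arc `(a,b)` of the digraph `H⁺_d`: either a parent-to-child arc of the tree, or an
arc between distinct incomparable vertices at distance at most `d`. -/
def HplusArc (T : PhyloTree V) (d : ℕ) (a b : V) : Prop :=
  T.ParentArc a b ∨ (a ≠ b ∧ T.Incomp a b ∧ T.dist a b ≤ d)

/-- `(a,b) ∈ A_sib` : arcs (in both directions) between siblings. -/
def SibArc (T : PhyloTree V) (a b : V) : Prop := T.Sibling a b

/-- `(a,b) ∈ A_nep` : arcs (in both directions) between a node and a child of its sibling. -/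
def NepArc (T : PhyloTree V) (a b : V) : Prop :=
  (∃ s, T.Sibling s b ∧ T.ParentArc s a) ∨ (∃ s, T.Sibling s a ∧ T.ParentArc s b)

/-- `(a,b) ∈ A_gnep` : arcs (in both directions) between a node and a grandchild of its
sibling. -/
def GnepArc (T : PhyloTree V) (a b : V) : Prop :=
  (∃ s c, T.Sibling s b ∧ T.ParentArc s c ∧ T.ParentArc c a) ∨
  (∃ s c, T.Sibling s a ∧ T.ParentArc s c ∧ T.ParentArc c b)

/-- `(a,b) ∈ A_cos` : arcs (in both directions) between cousins. -/
def CosArc (T : PhyloTree V) (a b : V) : Prop := T.Cousin a b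

end PhyloTree

/-- A directed cycle in the digraph with arc relation `G`, represented as an injective
cyclic sequence `f` of `n ≥ 2` vertices in which every consecutive arc is present. -/
def IsDicycle {α : Type*} (G : α → α → Prop) {n : ℕ} (f : ZMod n → α) : Prop :=
  2 ≤ n ∧ Function.Injective f ∧ ∀ i, G (f i) (f (i + 1))

/-- There is a directed path from `s` to `t` in the digraph `G` containing at least one
strict arc (i.e. parent-to-child arc of the tree `T`); here strict arcs of the graphs we
consider are always arcs of `G`. -/
def StrictReach {V : Type*} [Fintype V] [DecidableEq V] (T : PhyloTree V)
    (G : V → V → Prop) (s t : V) : Prop :=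
  ∃ a b, Relation.ReflTransGen G s a ∧ T.ParentArc a b ∧ Relation.ReflTransGen G b t

section Reconciliation

variable {VH VP : Type*} [Fintype VH] [DecidableEq VH] [Fintype VP] [DecidableEq VP]

/-- Host-switch event: one of the children's images is incomparable to `hp`, the other is
a descendant of `hp`. -/
def SwitchEvent (TH : PhyloTree VH) (hp h1 h2 : VH) : Prop :=
  (TH.Incomp h1 hp ∧ TH.Anc hp h2) ∨ (TH.Incomp h2 hp ∧ TH.Anc hp h1)

/-- Cospeciation event: the children's images are incomparable with LCA `hp`. -/
def CospEvent (TH : PhyloTree VH) (hp h1 h2 : VH) : Prop :=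
  TH.Incomp h1 h2 ∧ TH.IsLCA hp h1 h2

/-- Duplication event: both children's images are descendants of `hp`, and neither the
host-switch case nor the cospeciation case applies. -/
def DupEvent (TH : PhyloTree VH) (hp h1 h2 : VH) : Prop :=
  TH.Anc hp h1 ∧ TH.Anc hp h2 ∧ ¬ SwitchEvent TH hp h1 h2 ∧ ¬ CospEvent TH hp h1 h2

/-- `φ` is a reconciliation of `(H, P, σ)`: it agrees with `σ` on leaves, and at every
internal node exactly one of the three events (host switch, cospeciation, duplication)
applies. -/
def IsReconciliation (TH : PhyloTree VH) (TP : PhyloTree VP) (σ : VP → VH)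
    (φ : VP → VH) : Prop :=
  (∀ p, TP.IsLeaf p → φ p = σ p) ∧
  ∀ p p1 p2, TP.ParentArc p p1 → TP.ParentArc p p2 → p1 ≠ p2 →
    SwitchEvent TH (φ p) (φ p1) (φ p2) ∨ CospEvent TH (φ p) (φ p1) (φ p2) ∨
      DupEvent TH (φ p) (φ p1) (φ p2)

/-- `(u,v)` is a switching edge of `P` with respect to `φ` : `u` is the parent of `v` in
`P` and `φ u`, `φ v` are incomparable in `H`. -/
def SwitchingEdge (TH : PhyloTree VH) (TP : PhyloTree VP) (φ : VP → VH) (u v : VP) : Prop :=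
  TP.ParentArc u v ∧ TH.Incomp (φ u) (φ v)

/-- Arc `(a,b)` of `G^φ` : either a (strict) parent-to-child arc of `H`, or a (relaxed)
arc coming, in either direction, from a switching edge. -/
def GphiArc (TH : PhyloTree VH) (TP : PhyloTree VP) (φ : VP → VH) (a b : VH) : Prop :=
  TH.ParentArc a b ∨
    ∃ u v, SwitchingEdge TH TP φ u v ∧ ((a = φ u ∧ b = φ v) ∨ (a = φ v ∧ b = φ u))

/-- `φ` is strongly acyclic: no directed cycle of `G^φ` contains a strict arc. -/
def StronglyAcyclic (TH : PhyloTree VH) (TP : PhyloTree VP) (φ : VP → VH) : Prop :=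
  ¬ ∃ (n : ℕ) (f : ZMod n → VH),
      IsDicycle (GphiArc TH TP φ) f ∧ ∃ i, TH.ParentArc (f i) (f (i + 1))

/-- Arc `(a,b)` of `D^φ` : either an arc of `H`, or an arc from the parent of `φ u` or of
`φ v` (when it exists) to `φ u'` or `φ v'`, for switching edges `(u,v)`, `(u',v')` with
`u` an ancestor of `u'` in `P`. -/
def DphiArc (TH : PhyloTree VH) (TP : PhyloTree VP) (φ : VP → VH) (a b : VH) : Prop :=
  TH.ParentArc a b ∨
    ∃ u v u' v', SwitchingEdge TH TP φ u v ∧ SwitchingEdge TH TP φ u' v' ∧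
      TP.Anc u u' ∧
      ((φ u ≠ TH.root ∧ a = TH.parent (φ u)) ∨ (φ v ≠ TH.root ∧ a = TH.parent (φ v))) ∧
      (b = φ u' ∨ b = φ v')

/-- `φ` is acyclic (time-feasible): `D^φ` contains no directed cycle. -/
def Acyclic (TH : PhyloTree VH) (TP : PhyloTree VP) (φ : VP → VH) : Prop :=
  ¬ ∃ (n : ℕ) (f : ZMod n → VH), IsDicycle (DphiArc TH TP φ) f

end Reconciliation

/-- `G` contains no Type 1 cycle `(h_j, h_k, h_{k1})`, where `h_j`, `h_k` are siblings and
`h_{k1}` is a child of `h_k`. -/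
def NoType1 {V : Type*} [Fintype V] [DecidableEq V] (T : PhyloTree V)
    (G : V → V → Prop) : Prop :=
  ¬ ∃ hj hk hk1, T.Sibling hj hk ∧ T.ParentArc hk hk1 ∧
      G hj hk ∧ G hk hk1 ∧ G hk1 hj

/-- `G` contains no Type 2 cycle `(h_j, h_{j1}, h_k, h_{k1})`, where `h_j`, `h_k` are
siblings, `h_{j1}` is a child of `h_j` and `h_{k1}` is a child of `h_k`. -/
def NoType2 {V : Type*} [Fintype V] [DecidableEq V] (T : PhyloTree V)
    (G : V → V → Prop) : Prop :=
  ¬ ∃ hj hj1 hk hk1, T.Sibling hj hk ∧ T.ParentArc hj hj1 ∧ T.ParentArc hk hk1 ∧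
      G hj hj1 ∧ G hj1 hk ∧ G hk hk1 ∧ G hk1 hj

/-- `G` contains no Type 3 cycle `(h_j, h_{k1}, h_{k3}, h_{k2})`, where `h_j`, `h_k` are
siblings, `h_{k1}`, `h_{k2}` are the children of `h_k`, and `h_{k3}` is a child of
`h_{k1}`. -/
def NoType3 {V : Type*} [Fintype V] [DecidableEq V] (T : PhyloTree V)
    (G : V → V → Prop) : Prop :=
  ¬ ∃ hj hk hk1 hk2 hk3, T.Sibling hj hk ∧ hk1 ≠ hk2 ∧
      T.ParentArc hk hk1 ∧ T.ParentArc hk hk2 ∧ T.ParentArc hk1 hk3 ∧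
      G hj hk1 ∧ G hk1 hk3 ∧ G hk3 hk2 ∧ G hk2 hj

variable {VH VP : Type*} [Fintype VH] [DecidableEq VH] [Fintype VP] [DecidableEq VP]

section AuxProof

open Relation

/-- From any `ReflTransGen`-path we can extract a duplicate-free chain. -/
lemma exists_nodup_chain' {α : Type*} {G : α → α → Prop} {b a : α}
    (h : Relation.ReflTransGen G b a) :
    ∃ l : List α, l ≠ [] ∧ l.head? = some b ∧ l.getLast? = some a ∧
      l.Chain' G ∧ l.Nodup := by
  induction h using Relation.ReflTransGen.head_induction_on with
  | refl => exact ⟨[a], by simp [List.Chain', List.isChain_singleton]⟩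
  | head hbc _ ih =>
    rename_i x c _
    obtain ⟨l, hne, hhead, hlast, hchain, hnodup⟩ := ih
    by_cases hx : x ∈ l
    · obtain ⟨s, t, rfl⟩ := List.append_of_mem hx
      refine ⟨x :: t, by simp, by simp, ?_, ?_, ?_⟩
      · obtain ⟨w, hw⟩ : ∃ w, (x :: t).getLast? = some w :=
          Option.isSome_iff_exists.mp (by rw [List.getLast?_isSome]; simp)
        rw [List.getLast?_append, hw] at hlast
        rw [hw]
        simpa using hlast
      · exact hchain.suffix (List.suffix_append _ _)
      · exact hnodup.sublist ((List.suffix_append _ _).sublist)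
    · refine ⟨x :: l, by simp, by simp, ?_, ?_, by simp [hnodup, hx]⟩
      · obtain ⟨w, hw⟩ : ∃ w, l.getLast? = some w :=
          Option.isSome_iff_exists.mp (by rwa [List.getLast?_isSome])
        have : (x :: l).getLast? = l.getLast? := by
          rw [show x :: l = [x] ++ l from rfl, List.getLast?_append, hw]
          simp
        rw [this]; exact hlast
      · change List.IsChain G (x :: l); rw [List.isChain_cons]
        refine ⟨fun y hy => ?_, hchain⟩
        rw [hhead] at hy
        obtain rfl : c = y := by simpa using hy
        exact hbc

/-- A closed walk consisting of a strict arc `x → y` and a `G`-path from `y` back to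
`x` yields a genuine directed cycle through the strict arc. -/
lemma dicycle_of_strict_closed_walk {V : Type*} [Fintype V] [DecidableEq V]
    (T : PhyloTree V) (G : V → V → Prop) (hG : ∀ a b, T.ParentArc a b → G a b)
    {x y : V} (hxy : T.ParentArc x y) (hr : Relation.ReflTransGen G y x) :
    ∃ (n : ℕ) (f : ZMod n → V), IsDicycle G f ∧ ∃ i, T.ParentArc (f i) (f (i + 1)) := by
  obtain ⟨l, hne, hhead, hlast, hchain, hnodup⟩ := exists_nodup_chain' hr
  have hxny : x ≠ y := fun h => T.parentArc_irrefl x (h ▸ hxy)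
  set n := l.length with hn
  have hn1 : 1 ≤ n := by
    cases l with
    | nil => simp at hne
    | cons a t => simp [hn]
  have hheadget : ∀ h : 0 < l.length, l.get ⟨0, h⟩ = y := by
    intro h
    rw [List.get_mk_zero, ← Option.some_inj, ← List.head?_eq_head hne, hhead]
  have hlastget : ∀ h : n - 1 < l.length, l.get ⟨n - 1, h⟩ = x := by
    intro h
    rw [List.get_eq_getElem, ← Option.some_inj, ← hlast, List.getLast?_eq_getElem?]
    simp [hn]
  have hn2 : 2 ≤ n := by
    by_contra h
    have hone : n = 1 := by omega
    apply hxny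
    rw [← hlastget (by omega), ← hheadget (by omega)]
    congr 1
    exact Fin.ext (by omega)
  haveI : NeZero n := ⟨by omega⟩
  haveI : Fact (1 < n) := ⟨by omega⟩
  refine ⟨n, fun i => l.get ⟨i.val, hn ▸ ZMod.val_lt i⟩, ⟨hn2, ?_, ?_⟩, ?_⟩
  · intro i j hij
    simp only at hij
    have := (hnodup.get_inj_iff).1 hij
    exact ZMod.val_injective n (congrArg Fin.val this)
  · intro i
    show G (l.get ⟨i.val, hn ▸ ZMod.val_lt i⟩) (l.get ⟨(i+1).val, hn ▸ ZMod.val_lt (i+1)⟩)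
    have hv : (i + 1).val = (i.val + 1) % n := by
      rw [ZMod.val_add, ZMod.val_one]
    have hvi : i.val < n := ZMod.val_lt i
    rcases Nat.lt_or_ge (i.val + 1) n with h | h
    · have hv' : (i + 1).val = i.val + 1 := by rw [hv, Nat.mod_eq_of_lt h]
      have := List.isChain_iff_getElem.1 hchain i.val (by omega)
      convert this using 2
      all_goals simp [List.get_eq_getElem, hv']
    · have hiv : i.val = n - 1 := by omega
      have hv' : (i + 1).val = 0 := by
        rw [hv]; have h' : i.val + 1 = n := by omega
        rw [h', Nat.mod_self]
      have h1 : l.get ⟨i.val, hn ▸ ZMod.val_lt i⟩ = x := by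
        have := hlastget (by omega)
        convert this using 2
        exact Fin.ext hiv
      have h2 : l.get ⟨(i+1).val, hn ▸ ZMod.val_lt (i+1)⟩ = y := by
        have := hheadget (by omega)
        convert this using 2
        exact Fin.ext hv'
      rw [h1, h2]
      exact hG _ _ hxy
  · refine ⟨((n - 1 : ℕ) : ZMod n), ?_⟩
    show T.ParentArc (l.get ⟨(((n - 1 : ℕ) : ZMod n)).val, hn ▸ ZMod.val_lt _⟩)
      (l.get ⟨(((n - 1 : ℕ) : ZMod n) + 1).val, hn ▸ ZMod.val_lt _⟩)
    have hv1 : (((n - 1 : ℕ) : ZMod n)).val = n - 1 := by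
      rw [ZMod.val_natCast, Nat.mod_eq_of_lt (by omega)]
    have hv2 : (((n - 1 : ℕ) : ZMod n) + 1).val = 0 := by
      rw [ZMod.val_add, ZMod.val_one, hv1]
      have h' : n - 1 + 1 = n := by omega
      rw [h', Nat.mod_self]
    have h1 : l.get ⟨(((n - 1 : ℕ) : ZMod n)).val, hn ▸ ZMod.val_lt _⟩ = x := by
      have := hlastget (by omega)
      convert this using 2
      exact Fin.ext hv1
    have h2 : l.get ⟨(((n - 1 : ℕ) : ZMod n) + 1).val, hn ▸ ZMod.val_lt _⟩ = y := by
      have := hheadget (by omega)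
      convert this using 2
      exact Fin.ext hv2
    rw [h1, h2]
    exact hxy

end AuxProof

section AuxProof2

variable {VH VP : Type*} [Fintype VH] [DecidableEq VH] [Fintype VP] [DecidableEq VP]

/-- Descendant relation in the host tree gives a path of strict arcs in `G^φ`. -/
lemma reach_of_anc (TH : PhyloTree VH) (TP : PhyloTree VP) (φ : VP → VH) {a b : VH}
    (h : TH.Anc a b) : Relation.ReflTransGen (GphiArc TH TP φ) a b := by
  have key : ∀ (n : ℕ) (b : VH),
      Relation.ReflTransGen (GphiArc TH TP φ) (TH.parent^[n] b) b := by
    intro n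
    induction n with
    | zero => intro b; exact .refl
    | succ n ih =>
      intro b
      by_cases hb : b = TH.root
      · subst hb
        simp only [Function.iterate_fixed TH.parent_root]
        exact .refl
      · rw [Function.iterate_succ_apply]
        exact (ih (TH.parent b)).tail (Or.inl ⟨rfl, hb⟩)
  obtain ⟨n, rfl⟩ := h
  exact key n b

/-- For a parent arc of `P`, the image of the child is either a descendant of the image
of the parent, or the arc is a switching edge. -/
lemma step_of_parentArc {TH : PhyloTree VH} {TP : PhyloTree VP} {σ : VP → VH} {φ : VP → VH}
    (hφ : IsReconciliation TH TP σ φ) {p c : VP} (h : TP.ParentArc p c) :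
    TH.Anc (φ p) (φ c) ∨ SwitchingEdge TH TP φ p c := by
  have hcS : c ∈ Finset.univ.filter fun w => TP.parent w = p ∧ w ≠ TP.root := by
    simp [Finset.mem_filter, h.1, h.2]
  have hcard : (Finset.univ.filter fun w => TP.parent w = p ∧ w ≠ TP.root).card = 2 := by
    rcases TP.binary p with h0 | h2
    · rw [Finset.card_eq_zero] at h0
      rw [h0] at hcS
      simp at hcS
    · exact h2
  obtain ⟨c2, hc2S, hne⟩ :=
    Finset.exists_mem_ne
      (s := Finset.univ.filter fun w => TP.parent w = p ∧ w ≠ TP.root)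
      (by rw [hcard]; omega) c
  rw [Finset.mem_filter] at hc2S
  have hc2 : TP.ParentArc p c2 := ⟨hc2S.2.1, hc2S.2.2⟩
  rcases hφ.2 p c c2 h hc2 (fun hx => hne (hx.symm)) with hsw | hcos | hdup
  · rcases hsw with ⟨hinc, _⟩ | ⟨_, hanc⟩
    · exact Or.inr ⟨h, hinc.2, hinc.1⟩
    · exact Or.inl hanc
  · exact Or.inl hcos.2.1
  · exact Or.inl hdup.1

/-- Ancestry in the parasite tree gives a path in `G^φ` between the images. -/
lemma reach_of_pAnc {TH : PhyloTree VH} {TP : PhyloTree VP} {σ : VP → VH} {φ : VP → VH}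
    (hφ : IsReconciliation TH TP σ φ) {u u' : VP} (h : TP.Anc u u') :
    Relation.ReflTransGen (GphiArc TH TP φ) (φ u) (φ u') := by
  have key : ∀ (n : ℕ) (u' : VP),
      Relation.ReflTransGen (GphiArc TH TP φ) (φ (TP.parent^[n] u')) (φ u') := by
    intro n
    induction n with
    | zero => intro u'; exact .refl
    | succ n ih =>
      intro u'
      by_cases hu : u' = TP.root
      · subst hu
        simp only [Function.iterate_fixed TP.parent_root]
        exact .refl
      · rw [Function.iterate_succ_apply]
        refine (ih (TP.parent u')).trans ?_
        rcases step_of_parentArc hφ (⟨rfl, hu⟩ : TP.ParentArc (TP.parent u') u') with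
          hanc | hsw
        · exact reach_of_anc TH TP φ hanc
        · exact Relation.ReflTransGen.single (Or.inr ⟨_, _, hsw, Or.inl ⟨rfl, rfl⟩⟩)
  obtain ⟨n, rfl⟩ := h
  exact key n u'

/-- Every arc of `D^φ` can be realized in `G^φ` by a path containing a strict arc. -/
lemma dphi_strictReach {TH : PhyloTree VH} {TP : PhyloTree VP} {σ : VP → VH} {φ : VP → VH}
    (hφ : IsReconciliation TH TP σ φ) {a b : VH} (h : DphiArc TH TP φ a b) :
    StrictReach TH (GphiArc TH TP φ) a b := by
  rcases h with h | ⟨u, v, u', v', suv, su'v', hanc, ha, hb⟩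
  · exact ⟨a, b, .refl, h, .refl⟩
  · have hru : Relation.ReflTransGen (GphiArc TH TP φ) (φ u) (φ u') :=
      reach_of_pAnc hφ hanc
    have harc : GphiArc TH TP φ (φ v) (φ u) := Or.inr ⟨u, v, suv, Or.inr ⟨rfl, rfl⟩⟩
    have hrv : Relation.ReflTransGen (GphiArc TH TP φ) (φ v) (φ u') :=
      (Relation.ReflTransGen.single harc).trans hru
    have hb' : Relation.ReflTransGen (GphiArc TH TP φ) (φ u') b := by
      rcases hb with rfl | rfl
      · exact .refl
      · exact Relation.ReflTransGen.single (Or.inr ⟨u', v', su'v', Or.inl ⟨rfl, rfl⟩⟩)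
    rcases ha with ⟨hroot, rfl⟩ | ⟨hroot, rfl⟩
    · exact ⟨_, φ u, .refl, ⟨rfl, hroot⟩, hru.trans hb'⟩
    · exact ⟨_, φ v, .refl, ⟨rfl, hroot⟩, hrv.trans hb'⟩

/-- Every arc of `D^φ` can be realized in `G^φ` by a path. -/
lemma dphi_reach {TH : PhyloTree VH} {TP : PhyloTree VP} {σ : VP → VH} {φ : VP → VH}
    (hφ : IsReconciliation TH TP σ φ) {a b : VH} (h : DphiArc TH TP φ a b) :
    Relation.ReflTransGen (GphiArc TH TP φ) a b := by
  obtain ⟨x, y, r1, hxy, r2⟩ := dphi_strictReach hφ h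
  have harc : GphiArc TH TP φ x y := Or.inl hxy
  exact r1.trans ((Relation.ReflTransGen.single harc).trans r2)

end AuxProof2

/-- If a reconciliation `φ` of `(H, P, σ)` is strongly acyclic
(no directed cycle of `G^φ` contains a strict arc), then it is acyclic
(`D^φ` contains no directed cycle). -/
theorem strongly_acyclic_implies_acyclic
    (TH : PhyloTree VH) (TP : PhyloTree VP) (σ : VP → VH)
    (hσ : ∀ p, TP.IsLeaf p → TH.IsLeaf (σ p))
    (φ : VP → VH) (hφ : IsReconciliation TH TP σ φ)
    (hsa : StronglyAcyclic TH TP φ) :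
    Acyclic TH TP φ := by
  rintro ⟨n, f, hn2, hinj, harcs⟩
  haveI : NeZero n := ⟨by omega⟩
  have hstep : ∀ i, Relation.ReflTransGen (GphiArc TH TP φ) (f i) (f (i + 1)) :=
    fun i => dphi_reach hφ (harcs i)
  have hcycle : ∀ k : ℕ, Relation.ReflTransGen (GphiArc TH TP φ) (f 1) (f (1 + (k : ZMod n))) := by
    intro k
    induction k with
    | zero => simpa using (Relation.ReflTransGen.refl : Relation.ReflTransGen (GphiArc TH TP φ) (f 1) (f 1))
    | succ k ih =>
      have he : (1 : ZMod n) + ((k + 1 : ℕ) : ZMod n) = (1 + (k : ZMod n)) + 1 := by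
        push_cast; ring
      rw [he]
      exact ih.trans (hstep _)
  have hback : Relation.ReflTransGen (GphiArc TH TP φ) (f 1) (f 0) := by
    have := hcycle (n - 1)
    have he : (1 : ZMod n) + ((n - 1 : ℕ) : ZMod n) = 0 := by
      rw [show (1 : ZMod n) = ((1 : ℕ) : ZMod n) from by push_cast; ring, ← Nat.cast_add,
        show 1 + (n - 1) = n from by omega, ZMod.natCast_self]
    rwa [he] at this
  obtain ⟨x, y, r1, hxy, r2⟩ := dphi_strictReach hφ (harcs 0)
  rw [zero_add] at r2
  have hr : Relation.ReflTransGen (GphiArc TH TP φ) y x :=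
    r2.trans (hback.trans r1)
  exact hsa (dicycle_of_strict_closed_walk TH (GphiArc TH TP φ)
    (fun a b h => Or.inl h) hxy hr)
end

section
/- Let H and P be phylogenetic trees, let σ be a map from the leaves of P to the leaves of H, and let φ be a reconciliation of (H,P,σ). Let (u,v) and (u',v') be switching edges of P (not necessarily distinct) such that u is an ancestor of u' in P. If φ(u) is not the root of H, then G^φ contains a directed path from p(φ(u)) to φ(u') and a directed path from p(φ(u)) to φ(v'), each containing at least one strict arc; the same conclusion holds with φ(v) in place of φ(u) whenever φ(v) is not the root of H. -/
variable {VH VP : Type*} [Fintype VH] [DecidableEq VH] [Fintype VP] [DecidableEq VP]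

private theorem anc_reflTransGen_aux {V : Type*} [Fintype V] [DecidableEq V]
    (T : PhyloTree V) {a b : V} (h : T.Anc a b) :
    Relation.ReflTransGen T.ParentArc a b := by
  obtain ⟨n, hn⟩ := h
  induction n generalizing b with
  | zero => exact hn ▸ Relation.ReflTransGen.refl
  | succ n ih =>
    by_cases hb : b = T.root
    · subst hb
      rw [Function.iterate_succ_apply, T.parent_root] at hn
      exact ih hn
    · rw [Function.iterate_succ_apply] at hn
      exact (ih hn).tail ⟨rfl, hb⟩

private theorem child_path_aux
    (TH : PhyloTree VH) (TP : PhyloTree VP) (σ : VP → VH)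
    (φ : VP → VH) (hφ : IsReconciliation TH TP σ φ)
    {p c : VP} (hpc : TP.ParentArc p c) :
    Relation.ReflTransGen (GphiArc TH TP φ) (φ p) (φ c) := by
  classical
  have hc_mem : c ∈ Finset.univ.filter (fun w => TP.parent w = p ∧ w ≠ TP.root) := by
    simp [hpc.1, hpc.2]
  have h2 : (Finset.univ.filter fun w => TP.parent w = p ∧ w ≠ TP.root).card = 2 := by
    rcases TP.binary p with h0 | h2
    · rw [Finset.card_eq_zero] at h0
      rw [h0] at hc_mem
      exact absurd hc_mem (Finset.notMem_empty c)
    · exact h2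
  obtain ⟨c₂, hc₂mem, hne⟩ := Finset.exists_mem_ne (s := Finset.univ.filter fun w => TP.parent w = p ∧ w ≠ TP.root) (by rw [h2]; norm_num) c
  simp only [Finset.mem_filter, Finset.mem_univ, true_and] at hc₂mem
  have hpc₂ : TP.ParentArc p c₂ := hc₂mem
  have hev := hφ.2 p c c₂ hpc hpc₂ (Ne.symm hne)
  have key : TH.Anc (φ p) (φ c) ∨ TH.Incomp (φ p) (φ c) := by
    rcases hev with hsw | hco | hdu
    · rcases hsw with ⟨hinc, _⟩ | ⟨_, hanc⟩
      · exact Or.inr ⟨hinc.2, hinc.1⟩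
      · exact Or.inl hanc
    · exact Or.inl hco.2.1
    · exact Or.inl hdu.1
  rcases key with hanc | hinc
  · exact Relation.ReflTransGen.mono (fun a b h => Or.inl h) _ _ (anc_reflTransGen_aux TH hanc)
  · exact Relation.ReflTransGen.single
      (Or.inr ⟨p, c, ⟨hpc, hinc⟩, Or.inl ⟨rfl, rfl⟩⟩)

private theorem anc_gphi_path_aux
    (TH : PhyloTree VH) (TP : PhyloTree VP) (σ : VP → VH)
    (φ : VP → VH) (hφ : IsReconciliation TH TP σ φ)
    {p q : VP} (h : TP.Anc p q) :
    Relation.ReflTransGen (GphiArc TH TP φ) (φ p) (φ q) := by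
  obtain ⟨n, hn⟩ := h
  induction n generalizing q with
  | zero => exact hn ▸ Relation.ReflTransGen.refl
  | succ n ih =>
    by_cases hq : q = TP.root
    · subst hq
      rw [Function.iterate_succ_apply, TP.parent_root] at hn
      exact ih hn
    · rw [Function.iterate_succ_apply] at hn
      exact (ih hn).trans (child_path_aux TH TP σ φ hφ ⟨rfl, hq⟩)

/-- Let `(u,v)` and `(u',v')` be switching edges with `u` an ancestor of
`u'` in `P`. If `φ u` is not the root of `H`, then `G^φ` contains directed paths, each
with at least one strict arc, from the parent of `φ u` to `φ u'` and to `φ v'`; and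
likewise with `φ v` in place of `φ u` whenever `φ v` is not the root. -/
theorem gphi_strict_paths_from_parent
    (TH : PhyloTree VH) (TP : PhyloTree VP) (σ : VP → VH)
    (hσ : ∀ p, TP.IsLeaf p → TH.IsLeaf (σ p))
    (φ : VP → VH) (hφ : IsReconciliation TH TP σ φ)
    (u v u' v' : VP)
    (huv : SwitchingEdge TH TP φ u v) (huv' : SwitchingEdge TH TP φ u' v')
    (hanc : TP.Anc u u') :
    (φ u ≠ TH.root →
      StrictReach TH (GphiArc TH TP φ) (TH.parent (φ u)) (φ u') ∧
      StrictReach TH (GphiArc TH TP φ) (TH.parent (φ u)) (φ v')) ∧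
    (φ v ≠ TH.root →
      StrictReach TH (GphiArc TH TP φ) (TH.parent (φ v)) (φ u') ∧
      StrictReach TH (GphiArc TH TP φ) (TH.parent (φ v)) (φ v')) := by
  have pathU : Relation.ReflTransGen (GphiArc TH TP φ) (φ u) (φ u') :=
    anc_gphi_path_aux TH TP σ φ hφ hanc
  have arcU'V' : GphiArc TH TP φ (φ u') (φ v') :=
    Or.inr ⟨u', v', huv', Or.inl ⟨rfl, rfl⟩⟩
  have pathUV' : Relation.ReflTransGen (GphiArc TH TP φ) (φ u) (φ v') :=
    pathU.tail arcU'V'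
  have arcVU : GphiArc TH TP φ (φ v) (φ u) :=
    Or.inr ⟨u, v, huv, Or.inr ⟨rfl, rfl⟩⟩
  constructor
  · intro hru
    exact ⟨⟨TH.parent (φ u), φ u, Relation.ReflTransGen.refl, ⟨rfl, hru⟩, pathU⟩,
      ⟨TH.parent (φ u), φ u, Relation.ReflTransGen.refl, ⟨rfl, hru⟩, pathUV'⟩⟩
  · intro hrv
    exact ⟨⟨TH.parent (φ v), φ v, Relation.ReflTransGen.refl, ⟨rfl, hrv⟩,
        (Relation.ReflTransGen.single arcVU).trans pathU⟩,
      ⟨TH.parent (φ v), φ v, Relation.ReflTransGen.refl, ⟨rfl, hrv⟩,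
        (Relation.ReflTransGen.single arcVU).trans pathUV'⟩⟩
end

section
/- Let H be a phylogenetic tree, and let G be a spanning subgraph of H^+_3 such that (i) A_par ⊆ E(G), and (ii) (v,u) ∈ E(G) for every arc (u,v) ∈ E(G) \ A_par. Suppose that G contains no directed cycle of Type 1, Type 2, or Type 3. Then no directed cycle in G contains an arc from A_par. -/
section Aux

namespace PhyloTree

variable {V : Type*} [Fintype V] [DecidableEq V] (T : PhyloTree V)

/-- The depth of a vertex: the least number of parent steps to reach the root. -/
noncomputable def pdepth (v : V) : ℕ := Nat.find (T.toRoot v)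

lemma pdepth_spec (v : V) : T.parent^[T.pdepth v] v = T.root := Nat.find_spec (T.toRoot v)

variable {T}

lemma pdepth_parent {v : V} (hv : v ≠ T.root) :
    T.pdepth v = T.pdepth (T.parent v) + 1 := by
  have hle : T.pdepth v ≤ T.pdepth (T.parent v) + 1 := by
    apply Nat.find_le
    rw [Function.iterate_succ_apply]
    exact T.pdepth_spec (T.parent v)
  have h0 : T.pdepth v ≠ 0 := by
    intro h
    have hs := T.pdepth_spec v
    rw [h] at hs
    exact hv hs
  obtain ⟨k, hk⟩ := Nat.exists_eq_succ_of_ne_zero h0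
  have hs := T.pdepth_spec v
  rw [hk, Function.iterate_succ_apply] at hs
  have hk2 : T.pdepth (T.parent v) ≤ k := Nat.find_le hs
  omega

lemma ParentArc.pdepth_eq {a b : V} (h : T.ParentArc a b) :
    T.pdepth b = T.pdepth a + 1 := by
  rw [pdepth_parent h.2, h.1]

lemma Sibling.symm' {a b : V} (h : T.Sibling a b) : T.Sibling b a :=
  ⟨h.1.symm, h.2.2.1, h.2.1, h.2.2.2.symm⟩

lemma Sibling.pdepth_eq {a b : V} (h : T.Sibling a b) : T.pdepth a = T.pdepth b := by
  rw [pdepth_parent h.2.1, pdepth_parent h.2.2.1, h.2.2.2]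

lemma anc_of_parentArc {a b : V} (h : T.ParentArc a b) : T.Anc a b :=
  ⟨1, by simpa using h.1⟩

lemma Anc.trans' {a b c : V} (h1 : T.Anc a b) (h2 : T.Anc b c) : T.Anc a c := by
  obtain ⟨n, hn⟩ := h1; obtain ⟨m, hm⟩ := h2
  exact ⟨n + m, by rw [Function.iterate_add_apply, hm, hn]⟩

lemma Anc.peel {a v : V} (h : T.Anc a v) (hne : v ≠ a) : T.Anc a (T.parent v) := by
  obtain ⟨n, hn⟩ := h
  cases n with
  | zero => exact absurd hn hne
  | succ m => exact ⟨m, by rw [← Function.iterate_succ_apply]; exact hn⟩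

lemma anc_pdepth_lt : ∀ (k : ℕ) (v u : V), T.parent^[k] v = u → u ≠ v →
    T.pdepth u < T.pdepth v := by
  intro k
  induction k with
  | zero => intro v u h hne; simp only [Function.iterate_zero_apply] at h; exact (hne h.symm).elim
  | succ k ih =>
    intro v u h hne
    by_cases hv : v = T.root
    · subst hv
      rw [Function.iterate_fixed T.parent_root] at h
      exact absurd h.symm hne
    · rw [Function.iterate_succ_apply] at h
      by_cases hu : u = T.parent v
      · rw [pdepth_parent hv, ← hu]; omega
      · have hlt := ih (T.parent v) u h hu
        rw [pdepth_parent hv]; omega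

lemma Anc.pdepth_lt {u v : V} (h : T.Anc u v) (hne : v ≠ u) :
    T.pdepth u < T.pdepth v := by
  obtain ⟨k, hk⟩ := h
  exact anc_pdepth_lt k v u hk (fun hh => hne hh.symm)

lemma children_unique {v a b c : V} (hva : T.ParentArc v a) (hvb : T.ParentArc v b)
    (hvc : T.ParentArc v c) (hab : a ≠ b) (hac : a ≠ c) : b = c := by
  classical
  set S := Finset.univ.filter fun w => T.parent w = v ∧ w ≠ T.root with hS
  have ha : a ∈ S := by simp [hS, hva.1, hva.2]
  have hb : b ∈ S := by simp [hS, hvb.1, hvb.2]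
  have hc : c ∈ S := by simp [hS, hvc.1, hvc.2]
  rcases T.binary v with h0 | h2
  · rw [← hS] at h0
    rw [Finset.card_eq_zero] at h0
    rw [h0] at ha
    exact absurd ha (Finset.notMem_empty a)
  · rw [← hS] at h2
    have hbe : b ∈ S.erase a := Finset.mem_erase.2 ⟨fun h => hab h.symm, hb⟩
    have hce : c ∈ S.erase a := Finset.mem_erase.2 ⟨fun h => hac h.symm, hc⟩
    have hcard : (S.erase a).card = 1 := by
      rw [Finset.card_erase_of_mem ha, h2]
    obtain ⟨x, hx⟩ := Finset.card_eq_one.1 hcard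
    rw [hx, Finset.mem_singleton] at hbe hce
    rw [hbe, hce]

lemma sibling_unique {a b c : V} (hb : T.Sibling a b) (hc : T.Sibling a c) : b = c := by
  refine children_unique (v := T.parent a) ⟨rfl, hb.2.1⟩ ⟨hb.2.2.2.symm, hb.2.2.1⟩
    ⟨hc.2.2.2.symm, hc.2.2.1⟩ hb.1 hc.1

lemma ugraph_adj {a b : V} : T.ugraph.Adj a b ↔ T.ParentArc a b ∨ T.ParentArc b a :=
  Iff.rfl

lemma reachable_root : ∀ (k : ℕ) (v : V), T.parent^[k] v = T.root →
    T.ugraph.Reachable v T.root := by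
  intro k
  induction k with
  | zero => intro v h; rw [show v = T.root from h]
  | succ k ih =>
    intro v h
    by_cases hv : v = T.root
    · rw [hv]
    · rw [Function.iterate_succ_apply] at h
      have hadj : T.ugraph.Adj v (T.parent v) := Or.inr ⟨rfl, hv⟩
      exact hadj.reachable.trans (ih (T.parent v) h)

lemma walk_classify {a b : V} (w : T.ugraph.Walk a b)
    (hlen : w.length ≤ 3) (hne : a ≠ b) (hinc : T.Incomp a b) :
    T.Sibling a b ∨ T.NepArc a b := by
  match w with
  | SimpleGraph.Walk.nil => exact absurd rfl hne
  | SimpleGraph.Walk.cons h1 SimpleGraph.Walk.nil =>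
    rcases h1 with h1 | h1
    · exact absurd (anc_of_parentArc h1) hinc.1
    · exact absurd (anc_of_parentArc h1) hinc.2
  | SimpleGraph.Walk.cons (v := v1) h1 (SimpleGraph.Walk.cons h2
      SimpleGraph.Walk.nil) =>
    rcases h1 with h1 | h1 <;> rcases h2 with h2 | h2
    · exact absurd ((anc_of_parentArc h1).trans' (anc_of_parentArc h2)) hinc.1
    · -- ParentArc a v1, ParentArc b v1 : a = b
      exact absurd (h1.1.symm.trans h2.1) hne
    · -- ParentArc v1 a, ParentArc v1 b : siblings
      exact Or.inl ⟨hne, h1.2, h2.2, h1.1.trans h2.1.symm⟩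
    · exact absurd ((anc_of_parentArc h2).trans' (anc_of_parentArc h1)) hinc.2
  | SimpleGraph.Walk.cons (v := v1) h1 (SimpleGraph.Walk.cons (v := v2) h2
      (SimpleGraph.Walk.cons h3 SimpleGraph.Walk.nil)) =>
    rcases h1 with h1 | h1 <;> rcases h2 with h2 | h2 <;> rcases h3 with h3 | h3
    · -- ddd
      exact absurd (((anc_of_parentArc h1).trans' (anc_of_parentArc h2)).trans'
        (anc_of_parentArc h3)) hinc.1
    · -- dd u : parent v2 = v1 and parent v2 = b so v1 = b
      have hv1b : v1 = b := h2.1.symm.trans h3.1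
      rw [hv1b] at h1
      exact absurd (anc_of_parentArc h1) hinc.1
    · -- d u d : parent v1 = a, parent v1 = v2 so a = v2
      have hav2 : a = v2 := h1.1.symm.trans h2.1
      rw [← hav2] at h3
      exact absurd (anc_of_parentArc h3) hinc.1
    · -- d u u : a = v2, ParentArc b v2 = ParentArc b a
      have hav2 : a = v2 := h1.1.symm.trans h2.1
      rw [← hav2] at h3
      exact absurd (anc_of_parentArc h3) hinc.2
    · -- u d d : ParentArc v1 a, ParentArc v1 v2, ParentArc v2 b
      by_cases hav2 : a = v2
      · rw [← hav2] at h3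
        exact absurd (anc_of_parentArc h3) hinc.1
      · exact Or.inr (Or.inr ⟨v2, ⟨fun h => hav2 h.symm, h2.2, h1.2,
          h2.1.trans h1.1.symm⟩, h3⟩)
    · -- u d u : parent v2 = v1, parent v2 = b so v1 = b, ParentArc v1 a
      have hv1b : v1 = b := h2.1.symm.trans h3.1
      rw [hv1b] at h1
      exact absurd (anc_of_parentArc h1) hinc.2
    · -- u u d : ParentArc v1 a, ParentArc v2 v1, ParentArc v2 b
      by_cases hv1b : v1 = b
      · rw [hv1b] at h1
        exact absurd (anc_of_parentArc h1) hinc.2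
      · exact Or.inr (Or.inl ⟨v1, ⟨hv1b, h2.2, h3.2, h2.1.trans h3.1.symm⟩, h1⟩)
    · -- uuu
      exact absurd (((anc_of_parentArc h3).trans' (anc_of_parentArc h2)).trans'
        (anc_of_parentArc h1)) hinc.2
  | SimpleGraph.Walk.cons _ (SimpleGraph.Walk.cons _ (SimpleGraph.Walk.cons _
      (SimpleGraph.Walk.cons _ w'))) =>
    simp only [SimpleGraph.Walk.length_cons] at hlen
    omega

end PhyloTree

end Aux

variable {V : Type*} [Fintype V] [DecidableEq V]

/-- Let `G` be a spanning subgraph of `H⁺₃` containing all arcs of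
`A_par` and containing, together with each arc not in `A_par`, its reverse. If `G`
contains no cycle of Type 1, 2 or 3, then no directed cycle of `G` contains an arc of
`A_par`. -/
theorem no_long_without_short_dist3
    (T : PhyloTree V) (G : V → V → Prop)
    (hsub : ∀ a b, G a b → T.HplusArc 3 a b)
    (hpar : ∀ a b, T.ParentArc a b → G a b)
    (hrev : ∀ a b, G a b → ¬ T.ParentArc a b → G b a)
    (h1 : NoType1 T G) (h2 : NoType2 T G) (h3 : NoType3 T G) :
    ¬ ∃ (n : ℕ) (f : ZMod n → V),
        IsDicycle G f ∧ ∃ i, T.ParentArc (f i) (f (i + 1)) := by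
  rintro ⟨n, f, ⟨hn2, hinj, harc⟩, i0, hP⟩
  haveI : NeZero n := ⟨by omega⟩
  -- classification of arcs of G
  have hclass : ∀ u v : V, G u v →
      T.ParentArc u v ∨ T.Sibling u v ∨ T.NepArc u v := by
    intro u v hG
    rcases hsub _ _ hG with h | ⟨hne, hinc, hd⟩
    · exact Or.inl h
    · right
      obtain ⟨ku, hku⟩ := T.toRoot u
      obtain ⟨kv, hkv⟩ := T.toRoot v
      have hr : T.ugraph.Reachable u v :=
        (PhyloTree.reachable_root ku u hku).trans (PhyloTree.reachable_root kv v hkv).symm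
      obtain ⟨w, hw⟩ := hr.exists_walk_length_eq_dist
      exact PhyloTree.walk_classify w (by rw [hw]; exact hd) hne hinc
  -- the root is not on the cycle
  have hroot : ∀ j : ZMod n, f j ≠ T.root := by
    intro j hj
    have h := harc (j - 1)
    rw [sub_add_cancel, hj] at h
    rcases hclass _ _ h with hp | hs | hN
    · exact hp.2 rfl
    · exact hs.2.2.1 rfl
    · rcases hN with ⟨t, ht, _⟩ | ⟨t, _, ht⟩
      · exact ht.2.2.1 rfl
      · exact ht.2 rfl
  -- minimum depth of the parent of a cycle vertex
  obtain ⟨j0, -, hj0⟩ := Finset.exists_min_image Finset.univ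
    (fun j : ZMod n => T.pdepth (T.parent (f j))) ⟨0, Finset.mem_univ 0⟩
  set m : ℕ := T.pdepth (T.parent (f j0)) with hm
  have hmin : ∀ j : ZMod n, m ≤ T.pdepth (T.parent (f j)) :=
    fun j => hj0 j (Finset.mem_univ j)
  -- the key depth tool
  have hkey : ∀ a b : ZMod n, T.parent (f a) ≠ T.root →
      T.parent (f b) = T.parent (T.parent (f a)) →
      T.pdepth (T.parent (f a)) = m → False := by
    intro a b ha hab hma
    have h4 := PhyloTree.pdepth_parent ha
    have h5 := hmin b
    rw [hab] at h5
    omega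
  -- there is a "peak" : a vertex at the top entered by a nephew-to-uncle arc
  have hpeak : ∃ j : ZMod n, T.pdepth (T.parent (f j)) = m ∧
      ∃ t, T.Sibling t (f j) ∧ T.ParentArc t (f (j - 1)) := by
    by_contra hno
    push_neg at hno
    have hsib : ∀ j : ZMod n, T.pdepth (T.parent (f j)) = m →
        T.parent (f (j - 1)) = T.parent (f j) := by
      intro j hj
      have h := harc (j - 1)
      rw [sub_add_cancel] at h
      rcases hclass _ _ h with hp | hs | hN
      · exact (hkey j (j - 1) (by rw [hp.1]; exact hroot (j - 1)) (by rw [hp.1]) hj).elim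
      · exact hs.2.2.2
      · rcases hN with ⟨t, ht1, ht2⟩ | ⟨t, ht1, ht2⟩
        · exact (hno j hj t ht1 ht2).elim
        · exact (hkey j (j - 1) (by rw [ht2.1]; exact ht1.2.1)
            (by rw [ht2.1]; exact ht1.2.2.2.symm) hj).elim
    have hall : ∀ k : ℕ, T.pdepth (T.parent (f (j0 - (k : ZMod n)))) = m := by
      intro k
      induction k with
      | zero => simp [hm]
      | succ k ih =>
        have hstep := hsib _ ih
        have hidx : j0 - ((k + 1 : ℕ) : ZMod n) = j0 - (k : ZMod n) - 1 := by
          push_cast; ring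
        rw [hidx, hstep]
        exact ih
    have hallj : ∀ j : ZMod n, T.pdepth (T.parent (f j)) = m := by
      intro j
      have h := hall (j0 - j).val
      rwa [ZMod.natCast_val, ZMod.cast_id, sub_sub_cancel] at h
    exact hkey (i0 + 1) i0 (by rw [hP.1]; exact hroot i0) (by rw [hP.1]) (hallj _)
  obtain ⟨j, hjm, s, hsu, hsx⟩ := hpeak
  have hxu : G (f (j - 1)) (f j) := by
    have h := harc (j - 1); rwa [sub_add_cancel] at h
  -- the sibling s of the peak is not on the cycle
  have hsnot : f (j + 1) ≠ s → ∀ k : ZMod n, f k ≠ s := by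
    intro hzs k hk
    have h := harc (k - 1)
    rw [sub_add_cancel, hk] at h
    rcases hclass _ _ h with hp | hs | hN
    · exact hkey j (k - 1) (by rw [← hsu.2.2.2, hp.1]; exact hroot (k - 1))
        (by rw [← hp.1, hsu.2.2.2]) hjm
    · have heq : f (k - 1) = f j := PhyloTree.sibling_unique hs.symm' hsu
      have hk1 : k = j + 1 := sub_eq_iff_eq_add.mp (hinj heq)
      rw [hk1] at hk
      exact hzs hk
    · rcases hN with ⟨t, ht1, ht2⟩ | ⟨t, ht1, ht2⟩
      · have hts : t = f j := PhyloTree.sibling_unique ht1.symm' hsu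
        rw [hts] at ht2
        exact h2 ⟨f j, f (k - 1), s, f (j - 1), hsu.symm', ht2, hsx,
          hpar _ _ ht2, h, hpar _ _ hsx, hxu⟩
      · exact hkey j (k - 1) (by rw [← hsu.2.2.2, ht2.1]; exact ht1.2.1)
          (by rw [← hsu.2.2.2, ht2.1]; exact ht1.2.2.2.symm) hjm
  -- case analysis on the out-arc of the peak
  have hout := harc j
  rcases hclass _ _ hout with hpz | hsz | hNz
  · -- exit by a parent arc : trapping argument
    have hzs : f (j + 1) ≠ s := by
      intro h
      rw [h] at hpz
      have h2' : T.parent (f j) = f j := by rw [← hsu.2.2.2, hpz.1]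
      have h3' := PhyloTree.pdepth_parent (hroot j)
      rw [h2'] at h3'
      omega
    have hsnot' := hsnot hzs
    have htrapstep : ∀ ka : ZMod n, T.Anc (f j) (f ka) → f ka ≠ f j →
        T.Anc (f j) (f (ka + 1)) ∧ f (ka + 1) ≠ f j := by
      intro ka ha hane
      have harcab := harc ka
      have hlt := PhyloTree.Anc.pdepth_lt ha hane
      rcases hclass _ _ harcab with hp | hs | hN
      · refine ⟨ha.trans' (PhyloTree.anc_of_parentArc hp), ?_⟩
        intro h
        have hd := hp.pdepth_eq
        rw [h] at hd
        omega
      · have hpa := ha.peel hane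
        refine ⟨hpa.trans' (PhyloTree.anc_of_parentArc ⟨hs.2.2.2.symm, hs.2.2.1⟩), ?_⟩
        intro h
        have hd := hs.pdepth_eq
        rw [h] at hd
        omega
      · rcases hN with ⟨t, ht1, ht2⟩ | ⟨t, ht1, ht2⟩
        · by_cases hpau : T.parent (f ka) = f j
          · have htj : t = f j := by rw [← ht2.1]; exact hpau
            rw [htj] at ht1
            have hbs : f (ka + 1) = s := PhyloTree.sibling_unique ht1 hsu.symm'
            exact (hsnot' _ hbs).elim
          · have hpa := ha.peel hane
            have hpa2 := hpa.peel hpau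
            have hPb : T.ParentArc (T.parent (T.parent (f ka))) (f (ka + 1)) := by
              refine ⟨?_, ht1.2.2.1⟩
              rw [ht2.1]
              exact ht1.2.2.2.symm
            refine ⟨hpa2.trans' (PhyloTree.anc_of_parentArc hPb), ?_⟩
            intro h
            have hd1 : T.pdepth t = T.pdepth (f (ka + 1)) := ht1.pdepth_eq
            have hd2 : T.pdepth (f j) < T.pdepth (T.parent (f ka)) :=
              hpa.pdepth_lt hpau
            rw [ht2.1] at hd2
            rw [h] at hd1
            omega
        · have hpa := ha.peel hane
          have hPt : T.ParentArc (T.parent (f ka)) t := ⟨ht1.2.2.2, ht1.2.1⟩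
          have hAt := hpa.trans' (PhyloTree.anc_of_parentArc hPt)
          refine ⟨hAt.trans' (PhyloTree.anc_of_parentArc ht2), ?_⟩
          intro h
          have hd1 := ht2.pdepth_eq
          have hd2 := ht1.pdepth_eq
          rw [h] at hd1
          omega
    have htrap : ∀ k : ℕ, T.Anc (f j) (f (j + 1 + (k : ZMod n))) ∧
        f (j + 1 + (k : ZMod n)) ≠ f j := by
      intro k
      induction k with
      | zero =>
        refine ⟨by simpa using PhyloTree.anc_of_parentArc hpz, ?_⟩
        intro h
        simp only [Nat.cast_zero, add_zero] at h
        rw [h] at hpz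
        exact T.parentArc_irrefl _ hpz
      | succ k ih =>
        have hidx : ((k + 1 : ℕ) : ZMod n) = (k : ZMod n) + 1 := by push_cast; ring
        rw [hidx, ← add_assoc]
        exact htrapstep _ ih.1 ih.2
    have hone : (1 : ZMod n) + ((n - 1 : ℕ) : ZMod n) = 0 := by
      have h' : ((1 + (n - 1) : ℕ) : ZMod n) = 0 := by
        rw [show 1 + (n - 1) = n from by omega]
        exact ZMod.natCast_self n
      rwa [Nat.cast_add, Nat.cast_one] at h'
    have hfinal := htrap (n - 1)
    rw [add_assoc, hone, add_zero] at hfinal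
    exact hfinal.2 rfl
  · -- exit by a sibling arc : Type 1
    have hz : f (j + 1) = s := PhyloTree.sibling_unique hsz hsu.symm'
    exact h1 ⟨f j, s, f (j - 1), hsu.symm', hsx, (by rw [← hz]; exact hout),
      hpar _ _ hsx, hxu⟩
  · rcases hNz with ⟨t, ht1, ht2⟩ | ⟨t, ht1, ht2⟩
    · -- arc to the uncle of the peak : impossible (depth)
      exact hkey j (j + 1) (by rw [ht2.1]; exact ht1.2.1)
        (by rw [ht2.1]; exact ht1.2.2.2.symm) hjm
    · -- exit to a nephew y = f (j+1), a child of s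
      have hts : t = s := PhyloTree.sibling_unique ht1.symm' hsu.symm'
      rw [hts] at ht2
      -- ht2 : ParentArc s (f (j + 1))
      by_cases hyx : f (j + 1) = f (j - 1)
      · -- degenerate : n = 2
        have hidx : j + 1 = j - 1 := hinj hyx
        have h2z : ((2 : ℕ) : ZMod n) = 0 := by
          have h' : ((2 : ℕ) : ZMod n) = (j + 1) - (j - 1) := by push_cast; ring
          rw [hidx, sub_self] at h'
          exact h'
        have hn : n = 2 := by
          have hdvd := (ZMod.natCast_eq_zero_iff 2 n).mp h2z
          have := Nat.le_of_dvd (by norm_num) hdvd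
          omega
        subst hn
        have hcase : ∀ x : ZMod 2, x = 0 ∨ x = 1 := by decide
        rcases hcase (i0 - j) with h | h
        · rw [sub_eq_zero.mp h] at hP
          have : s = f j := by rw [← ht2.1, hP.1]
          exact hsu.1 this
        · have hij : i0 = j + 1 := by rw [sub_eq_iff_eq_add.mp h]; ring
          rw [hij] at hP
          have hidx2 : j + 1 + 1 = j := by
            have h0 : (2 : ZMod 2) = 0 := by decide
            calc j + 1 + 1 = j + 2 := by ring
            _ = j := by rw [h0, add_zero]
          rw [hidx2, hyx] at hP
          have d1 := hsx.pdepth_eq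
          have d2 := hsu.pdepth_eq
          have d3 := hP.pdepth_eq
          omega
      · -- main subcase : analyze the in-arc of x = f (j - 1)
        have hw := harc (j - 2)
        have hidx3 : j - 2 + 1 = j - 1 := by ring
        rw [hidx3] at hw
        have hys : f (j + 1) ≠ s := by
          intro h
          have hd := ht2.pdepth_eq
          rw [h] at hd
          omega
        have hsnot' := hsnot hys
        have hsxy : T.Sibling (f (j - 1)) (f (j + 1)) :=
          ⟨fun h => hyx h.symm, hsx.2, ht2.2, by rw [hsx.1, ht2.1]⟩
        rcases hclass _ _ hw with hp | hs | hN
        · have heq : f (j - 2) = s := by rw [← hp.1]; exact hsx.1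
          exact hsnot' _ heq
        · have heq : f (j - 2) = f (j + 1) := PhyloTree.sibling_unique hs.symm' hsxy
          have hidx4 : j - 2 = j + 1 := hinj heq
          have h3z : ((3 : ℕ) : ZMod n) = 0 := by
            have h' : ((3 : ℕ) : ZMod n) = (j + 1) - (j - 2) := by push_cast; ring
            rw [← hidx4, sub_self] at h'
            exact h'
          have hn3 : n = 3 := by
            have hdvd := (ZMod.natCast_eq_zero_iff 3 n).mp h3z
            have hle := Nat.le_of_dvd (by norm_num) hdvd
            rcases (by omega : n = 2 ∨ n = 3) with h' | h'
            · rw [h'] at hdvd; norm_num at hdvd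
            · exact h'
          subst hn3
          have hcase3 : ∀ x : ZMod 3, x = 0 ∨ x = 1 ∨ x = 2 := by decide
          rcases hcase3 (i0 - j) with h | h | h
          · rw [sub_eq_zero.mp h] at hP
            have : s = f j := by rw [← ht2.1, hP.1]
            exact hsu.1 this
          · have hij : i0 = j + 1 := by rw [sub_eq_iff_eq_add.mp h]; ring
            rw [hij] at hP
            have hidx5 : j + 1 + 1 = j - 1 := by
              have h0 : (3 : ZMod 3) = 0 := by decide
              calc j + 1 + 1 = j - 1 + 3 := by ring
              _ = j - 1 := by rw [h0, add_zero]
            rw [hidx5] at hP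
            have : f (j + 1) = s := by rw [← hP.1]; exact hsx.1
            exact hys this
          · have hij : i0 = j + 2 := by rw [sub_eq_iff_eq_add.mp h]; ring
            rw [hij] at hP
            have hidx7 : j + 2 + 1 = j := by
              have h0 : (3 : ZMod 3) = 0 := by decide
              calc j + 2 + 1 = j + 3 := by ring
              _ = j := by rw [h0, add_zero]
            have hidx6 : j + 2 = j - 1 := by
              have h0 : (3 : ZMod 3) = 0 := by decide
              calc j + 2 = j - 1 + 3 := by ring
              _ = j - 1 := by rw [h0, add_zero]
            rw [hidx7, hidx6] at hP
            have d1 := hsx.pdepth_eq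
            have d2 := hsu.pdepth_eq
            have d3 := hP.pdepth_eq
            omega
        · rcases hN with ⟨t', ht1', ht2'⟩ | ⟨t', ht1', ht2'⟩
          · -- Type 3
            have hty : t' = f (j + 1) := PhyloTree.sibling_unique ht1'.symm' hsxy
            rw [hty] at ht2'
            exact h3 ⟨f j, s, f (j + 1), f (j - 1), f (j - 2), hsu.symm', hyx, ht2,
              hsx, ht2', hout, hpar _ _ ht2', hw, hxu⟩
          · have hts' : t' = s := by rw [← ht2'.1]; exact hsx.1
            rw [hts'] at ht1'
            have heq : f (j - 2) = f j := PhyloTree.sibling_unique ht1' hsu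
            have hidx8 : j - 2 = j := hinj heq
            have h2z : ((2 : ℕ) : ZMod n) = 0 := by
              have h' : ((2 : ℕ) : ZMod n) = j - (j - 2) := by push_cast; ring
              rw [hidx8, sub_self] at h'
              exact h'
            have hji : j + 1 = j - 1 := by
              calc j + 1 = j - 1 + ((2 : ℕ) : ZMod n) := by push_cast; ring
              _ = j - 1 := by rw [h2z, add_zero]
            exact hyx (congrArg f hji)
end

section
/- Let H be a phylogenetic tree, and let G be a spanning subgraph of H^+_3 such that (i) A_par ⊆ E(G), and (ii) (v,u) ∈ E(G) for every arc (u,v) ∈ E(G) \ A_par. If G contains a directed cycle containing at least one arc from A_par, then G contains a directed cycle with at most 4 vertices containing at least one arc from A_par. -/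
section ShortCycleAux

namespace PhyloShortAux

open PhyloTree

variable {V : Type*} [Fintype V] [DecidableEq V]

/-- Height of a vertex: least number of parent steps to reach the root. -/
def ht (T : PhyloTree V) (v : V) : ℕ := Nat.find (T.toRoot v)

lemma ht_spec (T : PhyloTree V) (v : V) : T.parent^[ht T v] v = T.root :=
  Nat.find_spec (T.toRoot v)

lemma ht_le (T : PhyloTree V) {v : V} {n : ℕ} (h : T.parent^[n] v = T.root) : ht T v ≤ n :=
  Nat.find_le h

lemma ht_eq_zero (T : PhyloTree V) {v : V} : ht T v = 0 ↔ v = T.root := by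
  constructor
  · intro h
    have h2 := ht_spec T v
    rwa [h] at h2
  · rintro rfl
    exact Nat.le_zero.mp (ht_le T (by simp))

lemma ht_parent (T : PhyloTree V) {v : V} (hv : v ≠ T.root) :
    ht T v = ht T (T.parent v) + 1 := by
  have h1 : ht T v ≠ 0 := fun h => hv ((ht_eq_zero T).mp h)
  have h2 : T.parent^[ht T v - 1] (T.parent v) = T.root := by
    rw [← Function.iterate_succ_apply]
    have e : (ht T v - 1).succ = ht T v := by omega
    rw [e]
    exact ht_spec T v
  have h3 : ht T (T.parent v) ≤ ht T v - 1 := ht_le T h2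
  have h4 : ht T v ≤ ht T (T.parent v) + 1 := by
    apply ht_le
    rw [Function.iterate_succ_apply]
    exact ht_spec T (T.parent v)
  omega

lemma parent_eq_self (T : PhyloTree V) {v : V} (h : T.parent v = v) : v = T.root := by
  obtain ⟨n, hn⟩ := T.toRoot v
  rwa [Function.iterate_fixed h] at hn

lemma ht_iterate_le (T : PhyloTree V) (k : ℕ) (v : V) : ht T (T.parent^[k] v) ≤ ht T v := by
  induction k generalizing v with
  | zero => simp
  | succ k ih =>
    rw [Function.iterate_succ_apply]
    refine (ih (T.parent v)).trans ?_
    by_cases hv : v = T.root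
    · subst hv; rw [T.parent_root]
    · rw [ht_parent T hv]; omega

lemma parentArc_ne (T : PhyloTree V) {a b : V} (h : T.ParentArc a b) : a ≠ b := by
  rintro rfl
  exact h.2 (parent_eq_self T h.1)

lemma parentArc_ht (T : PhyloTree V) {a b : V} (h : T.ParentArc a b) :
    ht T b = ht T a + 1 := by
  rw [ht_parent T h.2, h.1]

lemma sibling_symm (T : PhyloTree V) {a b : V} (h : T.Sibling a b) : T.Sibling b a :=
  ⟨h.1.symm, h.2.2.1, h.2.1, h.2.2.2.symm⟩

lemma sibling_ht (T : PhyloTree V) {a b : V} (h : T.Sibling a b) : ht T a = ht T b := by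
  rw [ht_parent T h.2.1, ht_parent T h.2.2.1, h.2.2.2]

lemma sibling_unique (T : PhyloTree V) {a b c : V} (h1 : T.Sibling a b) (h2 : T.Sibling a c) :
    b = c := by
  by_contra hbc
  have hsub : ({a, b, c} : Finset V) ⊆
      Finset.univ.filter fun w => T.parent w = T.parent a ∧ w ≠ T.root := by
    intro w hw
    simp only [Finset.mem_insert, Finset.mem_singleton] at hw
    rcases hw with rfl | rfl | rfl
    · simp [h1.2.1]
    · simp [← h1.2.2.2, h1.2.2.1]
    · simp [← h2.2.2.2, h2.2.2.1]
  have hc3 : ({a, b, c} : Finset V).card = 3 := by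
    rw [Finset.card_insert_of_notMem (by simp [h1.1, h2.1]),
      Finset.card_insert_of_notMem (by simpa using hbc), Finset.card_singleton]
  have hle := Finset.card_le_card hsub
  rw [hc3] at hle
  rcases T.binary (T.parent a) with h0 | h2' <;> omega

lemma ugraph_adj (T : PhyloTree V) {u v : V} :
    T.ugraph.Adj u v ↔ T.ParentArc u v ∨ T.ParentArc v u := Iff.rfl

lemma reachable_root (T : PhyloTree V) (v : V) : T.ugraph.Reachable v T.root := by
  have key : ∀ (n : ℕ) (v : V), ht T v ≤ n → T.ugraph.Reachable v T.root := by
    intro n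
    induction n with
    | zero =>
      intro v hv
      rw [Nat.le_zero, ht_eq_zero] at hv
      subst hv
      exact SimpleGraph.Reachable.refl _
    | succ n ih =>
      intro v hv
      by_cases hroot : v = T.root
      · subst hroot; exact SimpleGraph.Reachable.refl _
      · have hadj : T.ugraph.Adj v (T.parent v) := Or.inr ⟨rfl, hroot⟩
        exact hadj.reachable.trans (ih _ (by rw [ht_parent T hroot] at hv; omega))
  exact key _ v le_rfl

lemma classify (T : PhyloTree V) {a b : V} (hne : a ≠ b) (hinc : T.Incomp a b)
    (hd : T.dist a b ≤ 3) :
    T.Sibling a b ∨ (∃ s, T.Sibling s a ∧ T.ParentArc s b) ∨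
      (∃ s, T.Sibling s b ∧ T.ParentArc s a) := by
  have anc1 : ∀ x y : V, T.parent y = x → T.Anc x y := fun x y h => ⟨1, by simpa using h⟩
  have anc2 : ∀ x y z : V, T.parent z = y → T.parent y = x → T.Anc x z := by
    intro x y z h1 h2
    exact ⟨2, by rw [show T.parent^[2] z = T.parent (T.parent z) from rfl, h1, h2]⟩
  have anc3 : ∀ x y z w : V, T.parent w = z → T.parent z = y → T.parent y = x → T.Anc x w := by
    intro x y z w h1 h2 h3
    exact ⟨3, by rw [show T.parent^[3] w = T.parent (T.parent (T.parent w)) from rfl, h1, h2, h3]⟩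
  have hd' : T.ugraph.dist a b ≤ 3 := by simpa [PhyloTree.dist] using hd
  have hdne : T.ugraph.dist a b ≠ 0 := by
    rw [SimpleGraph.dist_ne_zero_iff_ne_and_reachable]
    exact ⟨hne, (reachable_root T a).trans (reachable_root T b).symm⟩
  obtain ⟨p, hp⟩ := SimpleGraph.exists_walk_of_dist_ne_zero hdne
  cases p with
  | nil => simp at hdne
  | cons h1 q1 =>
    rename_i x
    cases q1 with
    | nil =>
      exfalso
      rcases (ugraph_adj T).mp h1 with hpa | hpa
      · exact hinc.1 (anc1 _ _ hpa.1)
      · exact hinc.2 (anc1 _ _ hpa.1)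
    | cons h2 q2 =>
      rename_i y
      cases q2 with
      | nil =>
        rcases (ugraph_adj T).mp h1 with hpa1 | hpa1 <;>
          rcases (ugraph_adj T).mp h2 with hpa2 | hpa2
        · exact absurd (anc2 _ _ _ hpa2.1 hpa1.1) hinc.1
        · exact absurd (hpa1.1.symm.trans hpa2.1) hne
        · exact Or.inl ⟨hne, hpa1.2, hpa2.2, hpa1.1.trans hpa2.1.symm⟩
        · exact absurd (anc2 _ _ _ hpa1.1 hpa2.1) hinc.2
      | cons h3 q3 =>
        rename_i z
        cases q3 with
        | nil =>
          simp only [SimpleGraph.Walk.length_cons, SimpleGraph.Walk.length_nil] at hp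
          rcases (ugraph_adj T).mp h1 with hpa1 | hpa1 <;>
            rcases (ugraph_adj T).mp h2 with hpa2 | hpa2 <;>
            rcases (ugraph_adj T).mp h3 with hpa3 | hpa3
          · exact absurd (anc3 _ _ _ _ hpa3.1 hpa2.1 hpa1.1) hinc.1
          · exfalso
            have hxb : x = b := hpa2.1.symm.trans hpa3.1
            subst hxb
            have hle := SimpleGraph.dist_le (SimpleGraph.Walk.cons h1 SimpleGraph.Walk.nil)
            simp at hle
            omega
          · exfalso
            have hay : a = y := hpa1.1.symm.trans hpa2.1
            subst hay
            exact hinc.1 (anc1 _ _ hpa3.1)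
          · exfalso
            have hay : a = y := hpa1.1.symm.trans hpa2.1
            subst hay
            exact hinc.2 (anc1 _ _ hpa3.1)
          · by_cases hya : y = a
            · subst hya
              exact absurd (anc1 _ _ hpa3.1) hinc.1
            · exact Or.inr (Or.inl ⟨y, ⟨hya, hpa2.2, hpa1.2, hpa2.1.trans hpa1.1.symm⟩,
                hpa3.1, hpa3.2⟩)
          · exfalso
            have hxb : x = b := hpa2.1.symm.trans hpa3.1
            subst hxb
            exact hinc.2 (anc1 _ _ hpa1.1)
          · by_cases hxb : x = b
            · exfalso
              subst hxb
              have hle := SimpleGraph.dist_le (SimpleGraph.Walk.cons h1 SimpleGraph.Walk.nil)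
              simp at hle
              omega
            · exact Or.inr (Or.inr ⟨x, ⟨hxb, hpa2.2, hpa3.2, hpa2.1.trans hpa3.1.symm⟩,
                hpa1.1, hpa1.2⟩)
          · exact absurd (anc3 _ _ _ _ hpa1.1 hpa2.1 hpa3.1) hinc.2
        | cons h4 q4 =>
          exfalso
          simp only [SimpleGraph.Walk.length_cons] at hp
          omega

lemma splice_lemma {α : Type*} {G : α → α → Prop} {n : ℕ} {f : ZMod n → α}
    (hn : 2 ≤ n) (hinj : Function.Injective f) (harc : ∀ i, G (f i) (f (i + 1)))
    {j k : ZMod n} (hjk : j ≠ k) (hjk1 : j + 1 ≠ k) (hG : G (f j) (f k)) :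
    ∃ (m : ℕ) (g : ZMod m → α) (i0 : ZMod m),
      m < n ∧ IsDicycle G g ∧ g i0 = f j ∧ g (i0 + 1) = f k := by
  haveI : NeZero n := ⟨by omega⟩
  set d : ℕ := (j - k).val with hdd
  have hdlt : d < n := ZMod.val_lt _
  have hdpos : 0 < d := by
    rcases Nat.eq_zero_or_pos d with h0 | h
    · exact absurd (sub_eq_zero.mp ((ZMod.val_eq_zero _).mp h0)) hjk
    · exact h
  have hdne : d ≠ n - 1 := by
    intro h
    apply hjk1
    have hjmk : j - k = ((n - 1 : ℕ) : ZMod n) := by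
      rw [← h, hdd, ZMod.natCast_rightInverse _]
    have h2 : ((n - 1 : ℕ) : ZMod n) + 1 = 0 := by
      have e : ((n - 1 : ℕ) : ZMod n) + 1 = ((n - 1 + 1 : ℕ) : ZMod n) := by push_cast; ring
      rw [e, (by omega : n - 1 + 1 = n), ZMod.natCast_self]
    linear_combination hjmk + h2
  have hcast : ∀ i : ZMod (d + 1), ((i.val : ℕ) : ZMod n).val = i.val :=
    fun i => ZMod.val_cast_of_lt (lt_of_lt_of_le i.val_lt (by omega))
  have hdcast : ((d : ℕ) : ZMod n) = j - k := by rw [hdd, ZMod.natCast_rightInverse _]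
  have htop : ∀ i : ZMod (d + 1), i.val = d →
      (k + ((i.val : ℕ) : ZMod n) = j ∧ i + 1 = 0) := by
    intro i hi
    constructor
    · rw [hi, hdcast]; ring
    · have h5 : i = ((d : ℕ) : ZMod (d + 1)) := by
        apply ZMod.val_injective
        rw [hi, ZMod.val_cast_of_lt (by omega : d < d + 1)]
      rw [h5]
      have e : ((d : ℕ) : ZMod (d + 1)) + 1 = ((d + 1 : ℕ) : ZMod (d + 1)) := by push_cast; ring
      rw [e, ZMod.natCast_self]
  refine ⟨d + 1, fun i => f (k + ((i.val : ℕ) : ZMod n)), ((d : ℕ) : ZMod (d + 1)),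
    by omega, ⟨by omega, ?_, ?_⟩, ?_, ?_⟩
  · intro i1 i2 h12
    have h13 := hinj h12
    have h14 := add_left_cancel h13
    have h15 := congrArg ZMod.val h14
    rw [hcast, hcast] at h15
    exact ZMod.val_injective _ h15
  · intro i
    beta_reduce
    by_cases hi : i.val = d
    · obtain ⟨e1, e2⟩ := htop i hi
      rw [e2]
      simp only [ZMod.val_zero, Nat.cast_zero, add_zero]
      rw [e1]
      exact hG
    · have hivlt : i.val + 1 < d + 1 := by have := i.val_lt; omega
      have hval1 : (i + 1).val = i.val + 1 := by
        have h5 : i + 1 = ((i.val + 1 : ℕ) : ZMod (d + 1)) := by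
          push_cast
          rw [ZMod.natCast_rightInverse]
        rw [h5, ZMod.val_cast_of_lt hivlt]
      rw [hval1]
      have e : ((i.val + 1 : ℕ) : ZMod n) = ((i.val : ℕ) : ZMod n) + 1 := by push_cast; ring
      rw [e, ← add_assoc]
      exact harc _
  · beta_reduce
    have hv : (((d : ℕ) : ZMod (d + 1))).val = d := ZMod.val_cast_of_lt (by omega)
    rw [hv, hdcast]
    congr 1
    ring
  · have hv : (((d : ℕ) : ZMod (d + 1))).val = d := ZMod.val_cast_of_lt (by omega)
    obtain ⟨e1, e2⟩ := htop _ hv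
    rw [e2]
    beta_reduce
    simp only [ZMod.val_zero, Nat.cast_zero, add_zero]

lemma rewrite_lemma {α : Type*} {G : α → α → Prop} {n : ℕ} {f : ZMod n → α}
    (hn : 2 ≤ n) (hinj : Function.Injective f) (harc : ∀ i, G (f i) (f (i + 1)))
    (hone : (1 : ZMod n) ≠ 0)
    (p : ZMod n) (s : α) (hs : ∀ q, f q ≠ s)
    (h1 : G (f (p - 1)) s) (h2 : G s (f (p + 1))) :
    IsDicycle G (Function.update f p s) := by
  refine ⟨hn, ?_, ?_⟩
  · intro x y hxy
    by_cases hx : x = p <;> by_cases hy : y = p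
    · rw [hx, hy]
    · rw [hx, Function.update_self, Function.update_of_ne hy] at hxy
      exact absurd hxy.symm (hs y)
    · rw [hy, Function.update_self, Function.update_of_ne hx] at hxy
      exact absurd hxy (hs x)
    · rw [Function.update_of_ne hx, Function.update_of_ne hy] at hxy
      exact hinj hxy
  · intro q
    by_cases hq : q = p
    · rw [hq, Function.update_self,
        Function.update_of_ne (fun h => hone (by linear_combination h))]
      exact h2
    · rcases eq_or_ne (q + 1) p with he | hne2
      · rw [Function.update_of_ne hq, he, Function.update_self,
          show q = p - 1 from by linear_combination he]
        exact h1
      · rw [Function.update_of_ne hq, Function.update_of_ne hne2]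
        exact harc q

lemma dicycle4 {α : Type*} {G : α → α → Prop} {x0 x1 x2 x3 : α}
    (h01 : x0 ≠ x1) (h02 : x0 ≠ x2) (h03 : x0 ≠ x3) (h12 : x1 ≠ x2) (h13 : x1 ≠ x3)
    (h23 : x2 ≠ x3)
    (a0 : G x0 x1) (a1 : G x1 x2) (a2 : G x2 x3) (a3 : G x3 x0) :
    ∃ g : ZMod 4 → α, IsDicycle G g ∧ g 1 = x1 ∧ g (1 + 1) = x2 := by
  have z10 : (1 : ZMod 4) ≠ 0 := by decide
  have z20 : (2 : ZMod 4) ≠ 0 := by decide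
  have z30 : (3 : ZMod 4) ≠ 0 := by decide
  have z21 : (2 : ZMod 4) ≠ 1 := by decide
  have z31 : (3 : ZMod 4) ≠ 1 := by decide
  have z32 : (3 : ZMod 4) ≠ 2 := by decide
  have hval : ∀ i : ZMod 4, i = 0 ∨ i = 1 ∨ i = 2 ∨ i = 3 := by decide
  refine ⟨fun i => if i = 0 then x0 else if i = 1 then x1 else if i = 2 then x2 else x3,
    ⟨by norm_num, ?_, ?_⟩, ?_, ?_⟩
  · intro i j hij
    rcases hval i with rfl | rfl | rfl | rfl <;> rcases hval j with rfl | rfl | rfl | rfl <;>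
      simp_all
  · intro i
    rcases hval i with rfl | rfl | rfl | rfl
    · rw [show (0 + 1 : ZMod 4) = 1 from by decide]
      simp_all
    · rw [show (1 + 1 : ZMod 4) = 2 from by decide]
      simp_all
    · rw [show (2 + 1 : ZMod 4) = 3 from by decide]
      simp_all
    · rw [show (3 + 1 : ZMod 4) = 0 from by decide]
      simp_all
  · simp_all
  · rw [show (1 + 1 : ZMod 4) = 2 from by decide]
    simp_all

lemma main_aux (T : PhyloTree V) (G : V → V → Prop)
    (hsub : ∀ a b, G a b → T.HplusArc 3 a b)
    (hpar : ∀ a b, T.ParentArc a b → G a b)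
    (D : ℕ) (hD : ∀ v, ht T v ≤ D) :
    ∀ (μ n : ℕ) (f : ZMod n → V), IsDicycle G f →
      ∀ i₀ : ZMod n, T.ParentArc (f i₀) (f (i₀ + 1)) →
      n * (D + 1) + (D - ht T (f (i₀ + 1))) ≤ μ →
      ∃ (m : ℕ) (g : ZMod m → V), m ≤ 4 ∧ IsDicycle G g ∧
        ∃ i, T.ParentArc (g i) (g (i + 1)) := by
  intro μ
  induction μ with
  | zero =>
    intro n f hcyc i₀ hi₀ hμ
    exfalso
    have h1 : 2 * 1 ≤ n * (D + 1) := Nat.mul_le_mul hcyc.1 (by omega)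
    omega
  | succ μ ih =>
    intro n f hcyc i₀ hi₀ hμ
    classical
    obtain ⟨hn2, hinj, harc⟩ := hcyc
    by_cases hn4 : n ≤ 4
    · exact ⟨n, f, hn4, ⟨hn2, hinj, harc⟩, i₀, hi₀⟩
    push_neg at hn4
    haveI : NeZero n := ⟨by omega⟩
    have hzero : ∀ d : ℕ, 0 < d → d ≤ 4 → ((d : ℕ) : ZMod n) ≠ 0 := by
      intro d hd1 hd2 h
      rw [ZMod.natCast_eq_zero_iff] at h
      have := Nat.le_of_dvd hd1 h
      omega
    obtain ⟨i, hiS, hmax⟩ := Finset.exists_max_image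
      (Finset.univ.filter fun p : ZMod n => T.ParentArc (f p) (f (p + 1)))
      (fun p => ht T (f (p + 1)))
      ⟨i₀, Finset.mem_filter.mpr ⟨Finset.mem_univ _, hi₀⟩⟩
    have hab : T.ParentArc (f i) (f (i + 1)) := (Finset.mem_filter.mp hiS).2
    have hmax' : ∀ p : ZMod n, T.ParentArc (f p) (f (p + 1)) →
        ht T (f (p + 1)) ≤ ht T (f (i + 1)) :=
      fun p hp => hmax p (Finset.mem_filter.mpr ⟨Finset.mem_univ _, hp⟩)
    have hμi : n * (D + 1) + (D - ht T (f (i + 1))) ≤ μ + 1 := by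
      have hm1 := hmax' i₀ hi₀
      have hm2 := Nat.sub_le_sub_left hm1 D
      linarith [hμ]
    have recSplice : ∀ j k : ZMod n, j ≠ k → j + 1 ≠ k → T.ParentArc (f j) (f k) →
        ∃ (m : ℕ) (g : ZMod m → V), m ≤ 4 ∧ IsDicycle G g ∧
          ∃ i', T.ParentArc (g i') (g (i' + 1)) := by
      intro j k hjk hjk1 hp
      obtain ⟨m, g, iw, hmlt, hgcyc, hg1, hg2⟩ :=
        splice_lemma hn2 hinj harc hjk hjk1 (hpar _ _ hp)
      refine ih m g hgcyc iw (by rw [hg1, hg2]; exact hp) ?_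
      have hq1 : m * (D + 1) + (D + 1) ≤ n * (D + 1) := by
        calc m * (D + 1) + (D + 1) = (m + 1) * (D + 1) := by ring
          _ ≤ n * (D + 1) := Nat.mul_le_mul_right _ (by omega)
      have hq2 : D - ht T (g (iw + 1)) ≤ D := Nat.sub_le _ _
      linarith [hμi]
    have recRewrite : ∀ (p : ZMod n) (s : V), (∀ q, f q ≠ s) →
        T.ParentArc (f (p - 1)) s → T.ParentArc s (f (p + 1)) →
        ht T (f (p + 1)) = ht T (f (i + 1)) + 1 →
        ∃ (m : ℕ) (g : ZMod m → V), m ≤ 4 ∧ IsDicycle G g ∧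
          ∃ i', T.ParentArc (g i') (g (i' + 1)) := by
      intro p s hnot hp1 hp2 hht
      have hone : (1 : ZMod n) ≠ 0 := fun h =>
        hzero 1 one_pos (by norm_num) (by push_cast; linear_combination h)
      have hcyc' := rewrite_lemma hn2 hinj harc hone p s hnot (hpar _ _ hp1) (hpar _ _ hp2)
      have hp1ne : p + 1 ≠ p := fun h => hone (by linear_combination h)
      refine ih n (Function.update f p s) hcyc' p ?_ ?_
      · rw [Function.update_self, Function.update_of_ne hp1ne]
        exact hp2
      · rw [Function.update_of_ne hp1ne]
        have hq3 : ht T (f (p + 1)) ≤ D := hD _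
        have hq4 : D - ht T (f (p + 1)) + 1 ≤ D - ht T (f (i + 1)) := by omega
        linarith [hμi]
    have classifyArc : ∀ p : ZMod n,
        T.ParentArc (f p) (f (p + 1)) ∨ T.Sibling (f p) (f (p + 1)) ∨
          (∃ s, T.Sibling s (f p) ∧ T.ParentArc s (f (p + 1))) ∨
          (∃ s, T.Sibling s (f (p + 1)) ∧ T.ParentArc s (f p)) := by
      intro p
      rcases hsub _ _ (harc p) with h | ⟨hne', hinc, hdist⟩
      · exact Or.inl h
      · exact Or.inr (classify T hne' hinc hdist)
    rcases classifyArc (i + 1) with hbc | hbc | ⟨s, hsb, hsc⟩ | ⟨s, hsc, hsb⟩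
    · exfalso
      have hq1 := hmax' (i + 1) hbc
      have hq2 := parentArc_ht T hbc
      omega
    · refine recSplice i (i + 1 + 1)
        (fun h => hzero 2 (by norm_num) (by norm_num) (by push_cast; linear_combination -h))
        (fun h => hzero 1 (by norm_num) (by norm_num) (by push_cast; linear_combination -h))
        ⟨hbc.2.2.2.symm.trans hab.1, hbc.2.2.1⟩
    · have has : T.ParentArc (f i) s := ⟨hsb.2.2.2.trans hab.1, hsb.2.1⟩
      by_cases hrange : ∃ j, f j = s
      · obtain ⟨j, hj⟩ := hrange
        refine recSplice j (i + 1 + 1) ?_ ?_ (by rw [hj]; exact hsc)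
        · intro h
          apply parentArc_ne T hsc
          rw [← hj, h]
        · intro h
          apply hsb.1
          rw [← hj, show j = i + 1 from by linear_combination h]
      · push_neg at hrange
        refine recRewrite (i + 1) s hrange ?_ hsc ?_
        · rw [show i + 1 - 1 = i from by ring]
          exact has
        · have hq1 := parentArc_ht T hsc
          have hq2 := sibling_ht T hsb
          omega
    · have hs_eq : s = f i := hsb.1.symm.trans hab.1
      subst hs_eq
      have hac : T.Sibling (f i) (f (i + 1 + 1)) := hsc
      have e1 : i - 1 + 1 = i := by ring
      have hza0 := classifyArc (i - 1)
      rw [e1] at hza0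
      rcases hza0 with hza | hza | ⟨t, htz, hta⟩ | ⟨t, hta, htz⟩
      · refine recSplice (i - 1) (i + 1 + 1)
          (fun h => hzero 3 (by norm_num) (by norm_num) (by push_cast; linear_combination -h))
          (fun h => hzero 2 (by norm_num) (by norm_num) (by push_cast; linear_combination -h))
          ⟨hac.2.2.2.symm.trans hza.1, hac.2.2.1⟩
      · exfalso
        have h5 : f (i - 1) = f (i + 1 + 1) := sibling_unique T (sibling_symm T hza) hac
        have h6 := hinj h5
        exact hzero 3 (by norm_num) (by norm_num) (by push_cast; linear_combination -h6)
      · rcases classifyArc (i + 1 + 1) with hcy | hcy | ⟨s', hs'c, hs'y⟩ | ⟨s'', hs''y, hs''c⟩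
        · rcases classifyArc (i + 1 + 1 + 1) with hyu | hyu | ⟨t', ht'y, ht'u⟩ | ⟨t'', ht''u, ht''y⟩
          · exfalso
            have hq1 := hmax' (i + 1 + 1 + 1) hyu
            have hq2 := parentArc_ht T hyu
            have hq3 := parentArc_ht T hcy
            have hq4 := sibling_ht T hac
            have hq5 := parentArc_ht T hab
            omega
          · refine recSplice (i + 1 + 1) (i + 1 + 1 + 1 + 1)
              (fun h => hzero 2 (by norm_num) (by norm_num)
                (by push_cast; linear_combination -h))
              (fun h => hzero 1 (by norm_num) (by norm_num)
                (by push_cast; linear_combination -h))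
              ⟨hyu.2.2.2.symm.trans hcy.1, hyu.2.2.1⟩
          · have hct' : T.ParentArc (f (i + 1 + 1)) t' := ⟨ht'y.2.2.2.trans hcy.1, ht'y.2.1⟩
            by_cases hrange : ∃ j, f j = t'
            · obtain ⟨j, hj⟩ := hrange
              refine recSplice j (i + 1 + 1 + 1 + 1) ?_ ?_ (by rw [hj]; exact ht'u)
              · intro h
                apply parentArc_ne T ht'u
                rw [← hj, h]
              · intro h
                apply ht'y.1
                rw [← hj, show j = i + 1 + 1 + 1 from by linear_combination h]
            · push_neg at hrange
              refine recRewrite (i + 1 + 1 + 1) t' hrange ?_ ht'u ?_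
              · rw [show i + 1 + 1 + 1 - 1 = i + 1 + 1 from by ring]
                exact hct'
              · have hq1 := parentArc_ht T ht'u
                have hq2 := sibling_ht T ht'y
                have hq3 := parentArc_ht T hcy
                have hq4 := sibling_ht T hac
                have hq5 := parentArc_ht T hab
                omega
          · exfalso
            have ht''c : t'' = f (i + 1 + 1) := ht''y.1.symm.trans hcy.1
            subst ht''c
            have h5 : f (i + 1 + 1 + 1 + 1) = f i := sibling_unique T ht''u (sibling_symm T hac)
            have h6 := hinj h5
            exact hzero 4 (by norm_num) (by norm_num) (by push_cast; linear_combination h6)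
        · exfalso
          have h5 : f (i + 1 + 1 + 1) = f i := sibling_unique T hcy (sibling_symm T hac)
          have h6 := hinj h5
          exact hzero 3 (by norm_num) (by norm_num) (by push_cast; linear_combination h6)
        · have h5 : s' = f i := sibling_unique T (sibling_symm T hs'c) (sibling_symm T hac)
          refine recSplice i (i + 1 + 1 + 1)
            (fun h => hzero 3 (by norm_num) (by norm_num)
              (by push_cast; linear_combination -h))
            (fun h => hzero 2 (by norm_num) (by norm_num)
              (by push_cast; linear_combination -h))
            (by rw [← h5]; exact hs'y)
        · exfalso
          have h6 : s'' = t := by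
            have hq1 : T.parent (f (i + 1 + 1)) = s'' := hs''c.1
            have hq2 : T.parent (f (i + 1 + 1)) = t := hac.2.2.2.symm.trans hta.1
            exact hq1.symm.trans hq2
          subst h6
          have h5 : f (i + 1 + 1 + 1) = f (i - 1) := sibling_unique T hs''y htz
          have h7 := hinj h5
          exact hzero 4 (by norm_num) (by norm_num) (by push_cast; linear_combination h7)
      · have h5 : t = f (i + 1 + 1) := sibling_unique T (sibling_symm T hta) hac
        subst h5
        have harc_z : G (f (i - 1)) (f i) := by
          have hq := harc (i - 1)
          rwa [e1] at hq
        have key : ∀ x y : ZMod n, f x = f y → x = y := fun x y h => hinj h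
        have hne01 : f (i - 1) ≠ f i := fun h =>
          hzero 1 (by norm_num) (by norm_num) (by push_cast; linear_combination -key _ _ h)
        have hne02 : f (i - 1) ≠ f (i + 1) := fun h =>
          hzero 2 (by norm_num) (by norm_num) (by push_cast; linear_combination -key _ _ h)
        have hne03 : f (i - 1) ≠ f (i + 1 + 1) := fun h =>
          hzero 3 (by norm_num) (by norm_num) (by push_cast; linear_combination -key _ _ h)
        have hne12 : f i ≠ f (i + 1) := fun h =>
          hzero 1 (by norm_num) (by norm_num) (by push_cast; linear_combination -key _ _ h)
        have hne13 : f i ≠ f (i + 1 + 1) := fun h =>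
          hzero 2 (by norm_num) (by norm_num) (by push_cast; linear_combination -key _ _ h)
        have hne23 : f (i + 1) ≠ f (i + 1 + 1) := fun h =>
          hzero 1 (by norm_num) (by norm_num) (by push_cast; linear_combination -key _ _ h)
        obtain ⟨g, hgcyc, hg1, hg2⟩ := dicycle4 hne01 hne02 hne03 hne12 hne13 hne23
          harc_z (harc i) (harc (i + 1)) (hpar _ _ htz)
        exact ⟨4, g, by norm_num, hgcyc, 1, by rw [hg1, hg2]; exact hab⟩

end PhyloShortAux

end ShortCycleAux

variable {V : Type*} [Fintype V] [DecidableEq V]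

/-- Let `G` be a spanning subgraph of `H⁺₃` containing all arcs of
`A_par` and containing, together with each arc not in `A_par`, its reverse. If `G`
contains a directed cycle with an arc of `A_par`, then it contains one with at most `4`
vertices. -/
theorem short_cycle_with_par_arc_dist3
    (T : PhyloTree V) (G : V → V → Prop)
    (hsub : ∀ a b, G a b → T.HplusArc 3 a b)
    (hpar : ∀ a b, T.ParentArc a b → G a b)
    (hrev : ∀ a b, G a b → ¬ T.ParentArc a b → G b a)
    (hex : ∃ (n : ℕ) (f : ZMod n → V),
        IsDicycle G f ∧ ∃ i, T.ParentArc (f i) (f (i + 1))) :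
    ∃ (n : ℕ) (f : ZMod n → V), n ≤ 4 ∧
        IsDicycle G f ∧ ∃ i, T.ParentArc (f i) (f (i + 1)) := by
  classical
  obtain ⟨n, f, hcyc, i, hi⟩ := hex
  exact PhyloShortAux.main_aux T G hsub hpar (Finset.univ.sup (PhyloShortAux.ht T))
    (fun v => Finset.le_sup (Finset.mem_univ v))
    (n * (Finset.univ.sup (PhyloShortAux.ht T) + 1) +
      (Finset.univ.sup (PhyloShortAux.ht T) - PhyloShortAux.ht T (f (i + 1))))
    n f hcyc i hi le_rfl
end

section
/- Let H be a phylogenetic tree and let G be a directed graph on the vertices of H with A_par ⊆ E(G). Let C be a directed cycle in G of minimum length among all directed cycles of G containing at least one arc from A_par. If a vertex b and its parent a (in H) both lie on C, then the arc (a,b) is an arc of C. -/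
variable {V : Type*} [Fintype V] [DecidableEq V]

/-- Let `G` be a digraph on the vertices of `H` with `A_par ⊆ E(G)`, and
let `C` (given by `f : ZMod n → V`) be a directed cycle of `G` of minimum length among
those containing an arc of `A_par`. If a vertex `b` and its parent `a` both lie on `C`,
then `(a,b)` is an arc of `C`. -/
theorem parent_on_min_cycle_arc
    (T : PhyloTree V) (G : V → V → Prop)
    (hpar : ∀ a b, T.ParentArc a b → G a b)
    (n : ℕ) (f : ZMod n → V) (hC : IsDicycle G f)
    (hCpar : ∃ i, T.ParentArc (f i) (f (i + 1)))
    (hmin : ∀ (m : ℕ) (g : ZMod m → V), IsDicycle G g →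
      (∃ j, T.ParentArc (g j) (g (j + 1))) → n ≤ m)
    (a b : V) (hab : T.ParentArc a b)
    (ha : a ∈ Set.range f) (hb : b ∈ Set.range f) :
    ∃ i, f i = a ∧ f (i + 1) = b := by
  obtain ⟨hn2, hinj, harc⟩ := hC
  haveI : NeZero n := ⟨by omega⟩
  obtain ⟨i, hi⟩ := ha
  obtain ⟨j, hj⟩ := hb
  have hne : a ≠ b := by
    rintro rfl
    exact T.parentArc_irrefl a hab
  by_cases hib : f (i + 1) = b
  · exact ⟨i, hi, hib⟩
  exfalso
  set d : ℕ := (i - j).val with hd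
  have hij : i ≠ j := fun h => hne (by rw [← hi, ← hj, h])
  have hd0 : d ≠ 0 := by
    intro h0
    exact hij (by simpa [sub_eq_zero] using (ZMod.val_eq_zero (i - j)).mp h0)
  have hdlt : d < n := ZMod.val_lt (i - j)
  have hdn1 : d ≠ n - 1 := by
    intro h1
    have hcast : ((d : ℕ) : ZMod n) = i - j := ZMod.natCast_rightInverse (i - j)
    have hne1 : i - j = -1 := by
      rw [← hcast, h1, Nat.cast_sub (by omega), ZMod.natCast_self, Nat.cast_one, zero_sub]
    have : j = i + 1 := by linear_combination -hne1
    exact hib (by rw [← this, hj])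
  set m : ℕ := d + 1 with hm
  have hmn : m < n := by omega
  haveI : NeZero m := ⟨by omega⟩
  haveI : Fact (1 < m) := ⟨by omega⟩
  set g : ZMod m → V := fun k => f (j + (k.val : ZMod n)) with hg
  have hvlt : ∀ k : ZMod m, k.val < m := fun k => ZMod.val_lt k
  have hcastinj : ∀ k k' : ZMod m, ((k.val : ℕ) : ZMod n) = k'.val → k = k' := by
    intro k k' h
    have h1 : k.val = k'.val := by
      have e1 := ZMod.val_cast_of_lt (n := n) (a := k.val) ((hvlt k).trans hmn)
      have e2 := ZMod.val_cast_of_lt (n := n) (a := k'.val) ((hvlt k').trans hmn)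
      rw [← e1, ← e2, h]
    exact ZMod.val_injective m h1
  have hlast : ∀ k : ZMod m, k.val = d → g k = a ∧ g (k + 1) = b := by
    intro k hk
    constructor
    · have : ((d : ℕ) : ZMod n) = i - j := ZMod.natCast_rightInverse (i - j)
      simp only [hg, hk, this]
      rw [show j + (i - j) = i by ring, hi]
    · have hk1 : k + 1 = 0 := by
        have : k = ((k.val : ℕ) : ZMod m) := (ZMod.natCast_rightInverse k).symm
        rw [this, hk, ← Nat.cast_one, ← Nat.cast_add, ← hm, ZMod.natCast_self]
      rw [hk1]
      simp only [hg, ZMod.val_zero, Nat.cast_zero, add_zero, hj]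
  have hgcycle : IsDicycle G g := by
    refine ⟨by omega, ?_, ?_⟩
    · intro k k' h
      have := hinj h
      exact hcastinj k k' (by exact add_left_cancel this)
    · intro k
      rcases eq_or_lt_of_le (Nat.succ_le_of_lt (hvlt k)) with heq | hlt
      · obtain ⟨h1, h2⟩ := hlast k (by omega)
        rw [h1, h2]
        exact hpar a b hab
      · have hv1 : (k + 1).val = k.val + 1 := by
          rw [ZMod.val_add_of_lt]
          · rw [ZMod.val_one]
          · rw [ZMod.val_one]; omega
        simp only [hg, hv1, Nat.cast_add, Nat.cast_one]
        rw [show j + ((k.val : ZMod n) + 1) = (j + k.val) + 1 by ring]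
        exact harc _
  have hk0 : ∃ k : ZMod m, T.ParentArc (g k) (g (k + 1)) := by
    refine ⟨((d : ℕ) : ZMod m), ?_⟩
    obtain ⟨h1, h2⟩ := hlast _ (ZMod.val_cast_of_lt (by omega))
    rw [h1, h2]
    exact hab
  have := hmin m g hgcycle hk0
  omega
end
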